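/- For α ≥ 1 and a probability density p on (0,∞), the α-moment of T[p] satisfies M_α(T[p]) ≤ (1/(2(α+1))) (2^{α−1}(α+2) + 1) M_α(p); in particular if M_α(p) < ∞ then M_α(T[p]) < ∞. -/

import Mathlib

open MeasureTheory Real Set
open scoped ENNReal
open intervalIntegral

noncomputable def T (p : ℝ → ℝ) (x : ℝ) : ℝ :=
  (1/2) * (∫ u in (0:ℝ)..x, p (x - u) * ∫ v in Ioi u, p v / v)
    + (1/2) * ∫ u in Ioi x, p u / u

noncomputable def Q (f : ℝ → ℝ) (u : ℝ) : ℝ≥0∞ := ∫⁻ v in Ioi u, ENNReal.ofReal (f v / v)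

lemma Q_anti (f : ℝ → ℝ) : Antitone (Q f) :=
  fun _ _ hab => lintegral_mono_set (Ioi_subset_Ioi hab)

lemma Q_meas (f : ℝ → ℝ) : Measurable (Q f) := (Q_anti f).measurable

lemma lint_rpow {α : ℝ} (hα : 0 ≤ α) {v : ℝ} (hv : 0 < v) :
    ∫⁻ x in Ioo (0:ℝ) v, ENNReal.ofReal (x ^ α) = ENNReal.ofReal (v ^ (α+1) / (α+1)) := by
  have hα1 : (0:ℝ) < α + 1 := by linarith
  have hi : IntervalIntegrable (fun x : ℝ => x ^ α) volume 0 v :=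
    intervalIntegral.intervalIntegrable_rpow' (by linarith)
  have hIoc : IntegrableOn (fun x : ℝ => x ^ α) (Ioc 0 v) volume :=
    (intervalIntegrable_iff_integrableOn_Ioc_of_le hv.le).1 hi
  have hval : ∫ x in (0:ℝ)..v, x ^ α = v ^ (α+1) / (α+1) := by
    rw [integral_rpow (Or.inl (by linarith))]
    rw [Real.zero_rpow (by positivity)]
    ring
  have hset : ∫ x in Ioc (0:ℝ) v, x ^ α = v ^ (α+1) / (α+1) := by
    rw [← intervalIntegral.integral_of_le hv.le]; exact hval
  rw [restrict_Ioo_eq_restrict_Ioc, ← hset]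
  rw [← MeasureTheory.ofReal_integral_eq_lintegral_ofReal hIoc]
  exact (ae_restrict_iff' measurableSet_Ioc).2 (ae_of_all _ fun x hx => Real.rpow_nonneg hx.1.le α)

lemma shift_Ioi (u : ℝ) (g : ℝ → ℝ≥0∞) : ∫⁻ x in Ioi u, g x = ∫⁻ w in Ioi 0, g (w + u) := by
  rw [← lintegral_indicator measurableSet_Ioi, ← lintegral_indicator measurableSet_Ioi,
    ← lintegral_add_right_eq_self (fun x => (Ioi u).indicator g x) u]
  congr 1; funext w
  by_cases hw : 0 < w
  · rw [Set.indicator_of_mem (by simpa using hw), Set.indicator_of_mem (by simpa using hw)]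
  · rw [Set.indicator_of_notMem (by simpa using hw), Set.indicator_of_notMem (by simpa using hw)]

lemma swap_Ioi (k : ℝ × ℝ → ℝ≥0∞) (hk : Measurable k) :
    ∫⁻ x in Ioi (0:ℝ), ∫⁻ y in Ioi (0:ℝ), k (x, y) = ∫⁻ y in Ioi (0:ℝ), ∫⁻ x in Ioi (0:ℝ), k (x, y) :=
  lintegral_lintegral_swap (hk.aemeasurable)

lemma L_II (f : ℝ → ℝ) (hf : Measurable f) :
    ∫⁻ u in Ioi (0:ℝ), Q f u = ∫⁻ v in Ioi (0:ℝ), ENNReal.ofReal (f v) := by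
  set k : ℝ × ℝ → ℝ≥0∞ :=
    ({q : ℝ × ℝ | q.1 < q.2}).indicator (fun q => ENNReal.ofReal (f q.2 / q.2)) with hk
  have hS : MeasurableSet {q : ℝ × ℝ | q.1 < q.2} := measurableSet_lt measurable_fst measurable_snd
  have hkm : Measurable k :=
    (ENNReal.measurable_ofReal.comp ((hf.comp measurable_snd).div measurable_snd)).indicator hS
  calc ∫⁻ u in Ioi (0:ℝ), Q f u
      = ∫⁻ u in Ioi (0:ℝ), ∫⁻ v in Ioi (0:ℝ), k (u, v) := by
        refine setLIntegral_congr_fun measurableSet_Ioi (fun u hu => ?_)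
        have h1 : ∀ v, k (u, v) = (Ioi u).indicator (fun v => ENNReal.ofReal (f v / v)) v := by
          intro v
          by_cases h : u < v
          · rw [hk, Set.indicator_of_mem (by exact h), Set.indicator_of_mem (by exact h)]
          · rw [hk, Set.indicator_of_notMem (by exact h), Set.indicator_of_notMem (by exact h)]
        simp_rw [h1]
        rw [lintegral_indicator measurableSet_Ioi,
          Measure.restrict_restrict measurableSet_Ioi,
          inter_eq_left.2 (Ioi_subset_Ioi (le_of_lt hu))]
        rfl
    _ = ∫⁻ v in Ioi (0:ℝ), ∫⁻ u in Ioi (0:ℝ), k (u, v) := swap_Ioi k hkm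
    _ = ∫⁻ v in Ioi (0:ℝ), ENNReal.ofReal (f v) := by
        refine setLIntegral_congr_fun measurableSet_Ioi (fun v hv => ?_)
        have h1 : ∀ u, k (u, v) = (Iio v).indicator (fun _ => ENNReal.ofReal (f v / v)) u := by
          intro u
          by_cases h : u < v
          · rw [hk, Set.indicator_of_mem (by exact h), Set.indicator_of_mem (by exact h)]
          · rw [hk, Set.indicator_of_notMem (by exact h), Set.indicator_of_notMem (by exact h)]
        simp_rw [h1]
        rw [lintegral_indicator measurableSet_Iio,
          Measure.restrict_restrict measurableSet_Iio, inter_comm, Ioi_inter_Iio,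
          setLIntegral_const, Real.volume_Ioo, sub_zero,
          ← ENNReal.ofReal_mul' hv.le, div_mul_cancel₀ _ (ne_of_gt hv)]

lemma L_I (f : ℝ → ℝ) (hf : Measurable f) {α : ℝ} (hα : 0 ≤ α) :
    ∫⁻ u in Ioi (0:ℝ), ENNReal.ofReal (u ^ α) * Q f u
      = ENNReal.ofReal (1 / (α + 1)) * ∫⁻ v in Ioi (0:ℝ), ENNReal.ofReal (v ^ α) * ENNReal.ofReal (f v) := by
  set k : ℝ × ℝ → ℝ≥0∞ :=
    ({q : ℝ × ℝ | q.1 < q.2}).indicator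
      (fun q => ENNReal.ofReal (q.1 ^ α) * ENNReal.ofReal (f q.2 / q.2)) with hk
  have hS : MeasurableSet {q : ℝ × ℝ | q.1 < q.2} := measurableSet_lt measurable_fst measurable_snd
  have hm1 : Measurable fun q : ℝ × ℝ => ENNReal.ofReal (q.1 ^ α) := by measurability
  have hkm : Measurable k :=
    (hm1.mul (ENNReal.measurable_ofReal.comp ((hf.comp measurable_snd).div measurable_snd))).indicator hS
  calc ∫⁻ u in Ioi (0:ℝ), ENNReal.ofReal (u ^ α) * Q f u
      = ∫⁻ u in Ioi (0:ℝ), ∫⁻ v in Ioi (0:ℝ), k (u, v) := by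
        refine setLIntegral_congr_fun measurableSet_Ioi (fun u hu => ?_)
        have h1 : ∀ v, k (u, v)
            = (Ioi u).indicator (fun v => ENNReal.ofReal (u ^ α) * ENNReal.ofReal (f v / v)) v := by
          intro v
          by_cases h : u < v
          · rw [hk, Set.indicator_of_mem (by exact h), Set.indicator_of_mem (by exact h)]
          · rw [hk, Set.indicator_of_notMem (by exact h), Set.indicator_of_notMem (by exact h)]
        simp_rw [h1]
        rw [lintegral_indicator measurableSet_Ioi,
          Measure.restrict_restrict measurableSet_Ioi,
          inter_eq_left.2 (Ioi_subset_Ioi (le_of_lt hu)),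
          lintegral_const_mul' _ _ ENNReal.ofReal_ne_top]
        rfl
    _ = ∫⁻ v in Ioi (0:ℝ), ∫⁻ u in Ioi (0:ℝ), k (u, v) := swap_Ioi k hkm
    _ = ∫⁻ v in Ioi (0:ℝ), ENNReal.ofReal (1 / (α + 1) * (v ^ α * f v)) := by
        refine setLIntegral_congr_fun measurableSet_Ioi (fun v hv => ?_)
        have h1 : ∀ u, k (u, v)
            = (Iio v).indicator (fun u => ENNReal.ofReal (u ^ α) * ENNReal.ofReal (f v / v)) u := by
          intro u
          by_cases h : u < v
          · rw [hk, Set.indicator_of_mem (by exact h), Set.indicator_of_mem (by exact h)]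
          · rw [hk, Set.indicator_of_notMem (by exact h), Set.indicator_of_notMem (by exact h)]
        simp_rw [h1]
        rw [lintegral_indicator measurableSet_Iio,
          Measure.restrict_restrict measurableSet_Iio, inter_comm, Ioi_inter_Iio,
          lintegral_mul_const' _ _ ENNReal.ofReal_ne_top, lint_rpow hα hv,
          ← ENNReal.ofReal_mul (div_nonneg (Real.rpow_nonneg hv.le _) (by linarith))]
        congr 1
        have hv' : v ≠ 0 := ne_of_gt hv
        have hrw : v ^ (α + 1) = v ^ α * v := Real.rpow_add_one hv' α
        rw [hrw]
        field_simp
    _ = ENNReal.ofReal (1 / (α + 1)) * ∫⁻ v in Ioi (0:ℝ), ENNReal.ofReal (v ^ α) * ENNReal.ofReal (f v) := by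
        rw [← lintegral_const_mul' _ _ ENNReal.ofReal_ne_top]
        refine setLIntegral_congr_fun measurableSet_Ioi (fun v hv => ?_)
        rw [ENNReal.ofReal_mul (div_nonneg zero_le_one (by linarith)),
          ENNReal.ofReal_mul (Real.rpow_nonneg hv.le α)]

-- real power inequality
lemma rpow_add_le (a b α : ℝ) (ha : 0 ≤ a) (hb : 0 ≤ b) (hα : 1 ≤ α) :
    (a + b) ^ α ≤ 2 ^ (α - 1) * (a ^ α + b ^ α) := by
  have := NNReal.rpow_add_le_mul_rpow_add_rpow ⟨a, ha⟩ ⟨b, hb⟩ hα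
  have h2 := NNReal.coe_le_coe.2 this
  push_cast at h2
  convert h2 using 2 <;> rfl

lemma L_III (f : ℝ → ℝ) (hf : Measurable f) {α : ℝ} (hα : 1 ≤ α) :
    ∫⁻ x in Ioi (0:ℝ), ENNReal.ofReal (x ^ α) * ∫⁻ u in Ioo (0:ℝ) x, ENNReal.ofReal (f (x - u)) * Q f u
      ≤ ENNReal.ofReal (2 ^ (α - 1)) *
          ((∫⁻ w in Ioi (0:ℝ), ENNReal.ofReal (w ^ α) * ENNReal.ofReal (f w)) * (∫⁻ u in Ioi (0:ℝ), Q f u)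
            + (∫⁻ w in Ioi (0:ℝ), ENNReal.ofReal (f w)) *
                (∫⁻ u in Ioi (0:ℝ), ENNReal.ofReal (u ^ α) * Q f u)) := by
  set M : ℝ≥0∞ := ∫⁻ w in Ioi (0:ℝ), ENNReal.ofReal (w ^ α) * ENNReal.ofReal (f w) with hM
  set It : ℝ≥0∞ := ∫⁻ w in Ioi (0:ℝ), ENNReal.ofReal (f w) with hIt
  set k : ℝ × ℝ → ℝ≥0∞ :=
    ({q : ℝ × ℝ | q.2 < q.1}).indicator
      (fun q => ENNReal.ofReal (q.1 ^ α) * (ENNReal.ofReal (f (q.1 - q.2)) * Q f q.2)) with hk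
  have hS : MeasurableSet {q : ℝ × ℝ | q.2 < q.1} := measurableSet_lt measurable_snd measurable_fst
  have hm1 : Measurable fun q : ℝ × ℝ => ENNReal.ofReal (q.1 ^ α) := by measurability
  have hkm : Measurable k :=
    (hm1.mul ((ENNReal.measurable_ofReal.comp (hf.comp (measurable_fst.sub measurable_snd))).mul
      ((Q_meas f).comp measurable_snd))).indicator hS
  have hmuα : Measurable fun u : ℝ => ENNReal.ofReal (u ^ α) := by measurability
  have step1 : ∫⁻ x in Ioi (0:ℝ), ENNReal.ofReal (x ^ α) * ∫⁻ u in Ioo (0:ℝ) x, ENNReal.ofReal (f (x - u)) * Q f u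
      = ∫⁻ x in Ioi (0:ℝ), ∫⁻ u in Ioi (0:ℝ), k (x, u) := by
    refine setLIntegral_congr_fun measurableSet_Ioi (fun x hx => ?_)
    have h1 : ∀ u, k (x, u)
        = (Iio x).indicator (fun u => ENNReal.ofReal (x ^ α) * (ENNReal.ofReal (f (x - u)) * Q f u)) u := by
      intro u
      by_cases h : u < x
      · rw [hk, Set.indicator_of_mem (by exact h), Set.indicator_of_mem (by exact h)]
      · rw [hk, Set.indicator_of_notMem (by exact h), Set.indicator_of_notMem (by exact h)]
    simp_rw [h1]
    rw [lintegral_indicator measurableSet_Iio,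
      Measure.restrict_restrict measurableSet_Iio, inter_comm, Ioi_inter_Iio,
      lintegral_const_mul' _ _ ENNReal.ofReal_ne_top]
  have step2 : ∀ u : ℝ, u ∈ Ioi (0:ℝ) →
      ∫⁻ x in Ioi (0:ℝ), k (x, u)
        ≤ (ENNReal.ofReal (2 ^ (α - 1)) * (M + ENNReal.ofReal (u ^ α) * It)) * Q f u := by
    intro u hu
    have h1 : ∀ x, k (x, u)
        = (Ioi u).indicator (fun x => (ENNReal.ofReal (x ^ α) * ENNReal.ofReal (f (x - u))) * Q f u) x := by
      intro x
      by_cases h : u < x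
      · rw [hk, Set.indicator_of_mem (by exact h), Set.indicator_of_mem (by exact h), mul_assoc]
      · rw [hk, Set.indicator_of_notMem (by exact h), Set.indicator_of_notMem (by exact h)]
    simp_rw [h1]
    rw [lintegral_indicator measurableSet_Ioi,
      Measure.restrict_restrict measurableSet_Ioi,
      inter_eq_left.2 (Ioi_subset_Ioi (le_of_lt hu)),
      lintegral_mul_const _ (show Measurable fun x : ℝ =>
        ENNReal.ofReal (x ^ α) * ENNReal.ofReal (f (x - u)) from hmuα.mul
          (ENNReal.measurable_ofReal.comp (hf.comp (measurable_sub_const u))))]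
    refine mul_le_mul_left ?_ (Q f u)
    have hshift : ∫⁻ x in Ioi u, ENNReal.ofReal (x ^ α) * ENNReal.ofReal (f (x - u))
        = ∫⁻ w in Ioi (0:ℝ), ENNReal.ofReal ((w + u) ^ α) * ENNReal.ofReal (f w) := by
      rw [shift_Ioi u (fun x => ENNReal.ofReal (x ^ α) * ENNReal.ofReal (f (x - u)))]
      congr 1; funext w; rw [add_sub_cancel_right]
    rw [hshift]
    calc ∫⁻ w in Ioi (0:ℝ), ENNReal.ofReal ((w + u) ^ α) * ENNReal.ofReal (f w)
        ≤ ∫⁻ w in Ioi (0:ℝ),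
            (ENNReal.ofReal (2 ^ (α - 1)) * (ENNReal.ofReal (w ^ α) + ENNReal.ofReal (u ^ α)))
              * ENNReal.ofReal (f w) := by
          refine setLIntegral_mono ((measurable_const.mul (hmuα.add measurable_const)).mul
            (ENNReal.measurable_ofReal.comp hf)) fun w hw => ?_
          refine mul_le_mul_left ?_ _
          calc ENNReal.ofReal ((w + u) ^ α)
              ≤ ENNReal.ofReal (2 ^ (α - 1) * (w ^ α + u ^ α)) :=
                ENNReal.ofReal_le_ofReal (rpow_add_le w u α (le_of_lt hw) (le_of_lt hu) hα)
            _ = ENNReal.ofReal (2 ^ (α - 1)) * (ENNReal.ofReal (w ^ α) + ENNReal.ofReal (u ^ α)) := by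
                rw [ENNReal.ofReal_mul (by positivity),
                  ENNReal.ofReal_add (Real.rpow_nonneg (le_of_lt hw) α) (Real.rpow_nonneg (le_of_lt hu) α)]
      _ = ENNReal.ofReal (2 ^ (α - 1)) * (M + ENNReal.ofReal (u ^ α) * It) := by
          have hrw : ∀ w : ℝ,
              (ENNReal.ofReal (2 ^ (α - 1)) * (ENNReal.ofReal (w ^ α) + ENNReal.ofReal (u ^ α)))
                * ENNReal.ofReal (f w)
              = ENNReal.ofReal (2 ^ (α - 1)) *
                  (ENNReal.ofReal (w ^ α) * ENNReal.ofReal (f w)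
                    + ENNReal.ofReal (u ^ α) * ENNReal.ofReal (f w)) := by
            intro w; ring
          simp_rw [hrw]
          rw [lintegral_const_mul' _ _ ENNReal.ofReal_ne_top,
            lintegral_add_left (show Measurable fun w : ℝ =>
              ENNReal.ofReal (w ^ α) * ENNReal.ofReal (f w) from
                hmuα.mul (ENNReal.measurable_ofReal.comp hf)),
            lintegral_const_mul' _ _ ENNReal.ofReal_ne_top]
  calc ∫⁻ x in Ioi (0:ℝ), ENNReal.ofReal (x ^ α) * ∫⁻ u in Ioo (0:ℝ) x, ENNReal.ofReal (f (x - u)) * Q f u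
      = ∫⁻ u in Ioi (0:ℝ), ∫⁻ x in Ioi (0:ℝ), k (x, u) := by rw [step1]; exact swap_Ioi k hkm
    _ ≤ ∫⁻ u in Ioi (0:ℝ), (ENNReal.ofReal (2 ^ (α - 1)) * (M + ENNReal.ofReal (u ^ α) * It)) * Q f u := by
        exact setLIntegral_mono ((measurable_const.mul
          (measurable_const.add (hmuα.mul measurable_const))).mul (Q_meas f)) step2
    _ = ENNReal.ofReal (2 ^ (α - 1)) * (M * (∫⁻ u in Ioi (0:ℝ), Q f u)
          + It * (∫⁻ u in Ioi (0:ℝ), ENNReal.ofReal (u ^ α) * Q f u)) := by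
        have hrw : ∀ u : ℝ,
            (ENNReal.ofReal (2 ^ (α - 1)) * (M + ENNReal.ofReal (u ^ α) * It)) * Q f u
            = ENNReal.ofReal (2 ^ (α - 1)) *
                (M * Q f u + It * (ENNReal.ofReal (u ^ α) * Q f u)) := by
          intro u; ring
        simp_rw [hrw]
        rw [lintegral_const_mul' _ _ ENNReal.ofReal_ne_top,
          lintegral_add_left (show Measurable fun u : ℝ => M * Q f u from measurable_const.mul (Q_meas f)),
          lintegral_const_mul _ (Q_meas f),
          lintegral_const_mul _ (show Measurable fun u : ℝ => ENNReal.ofReal (u ^ α) * Q f u from hmuα.mul (Q_meas f))]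

-- helper: ofReal of integral ≤ lintegral of ofReal, unconditional
lemma ofReal_integral_le (μ : Measure ℝ) (g : ℝ → ℝ) :
    ENNReal.ofReal (∫ x, g x ∂μ) ≤ ∫⁻ x, ENNReal.ofReal (g x) ∂μ := by
  by_cases hg : Integrable g μ
  · have h1 : ∫ x, g x ∂μ ≤ ∫ x, max (g x) 0 ∂μ :=
      integral_mono hg (hg.sup (integrable_zero _ _ _)) (fun x => le_max_left _ _)
    calc ENNReal.ofReal (∫ x, g x ∂μ) ≤ ENNReal.ofReal (∫ x, max (g x) 0 ∂μ) :=
            ENNReal.ofReal_le_ofReal h1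
      _ = ∫⁻ x, ENNReal.ofReal (max (g x) 0) ∂μ :=
            MeasureTheory.ofReal_integral_eq_lintegral_ofReal
              (hg.sup (integrable_zero _ _ _)) (ae_of_all _ fun x => le_max_right _ _)
      _ = ∫⁻ x, ENNReal.ofReal (g x) ∂μ := by
            congr 1; funext x
            rcases le_total (g x) 0 with h | h
            · simp [max_eq_right h, ENNReal.ofReal_eq_zero.2 h]
            · simp [max_eq_left h]
  · simp [integral_undef hg]

theorem moment_bound_T (p : ℝ → ℝ) (α : ℝ) (hα : 1 ≤ α)
    (hint : IntegrableOn p (Ioi 0))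
    (hpos : ∀ᵐ x ∂(volume.restrict (Ioi (0:ℝ))), 0 ≤ p x)
    (hone : ∫ x in Ioi (0:ℝ), p x = 1) :
    (∫⁻ x in Ioi (0:ℝ), ENNReal.ofReal (x ^ α * T p x))
      ≤ ENNReal.ofReal ((1 / (2 * (α + 1))) * (2 ^ (α - 1) * (α + 2) + 1))
          * ∫⁻ x in Ioi (0:ℝ), ENNReal.ofReal (x ^ α * p x) := by
  have hα0 : (0:ℝ) ≤ α := le_trans zero_le_one hα
  have hα1 : (0:ℝ) < α + 1 := by linarith
  -- measurable nonneg representative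
  have hae : AEMeasurable p (volume.restrict (Ioi 0)) := hint.aemeasurable
  set g : ℝ → ℝ := hae.mk p with hgdef
  have hg : Measurable g := hae.measurable_mk
  have hpg : p =ᵐ[volume.restrict (Ioi 0)] g := hae.ae_eq_mk
  set f : ℝ → ℝ := (Ioi 0).indicator (fun x => max (g x) 0) with hfdef
  have hf : Measurable f := (hg.max measurable_const).indicator measurableSet_Ioi
  have hf0 : ∀ x, 0 ≤ f x := fun x => by
    by_cases h : x ∈ Ioi (0:ℝ)
    · rw [hfdef, indicator_of_mem h]; exact le_max_right _ _
    · rw [hfdef, indicator_of_notMem h]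
  have hpf : p =ᵐ[volume.restrict (Ioi 0)] f := by
    filter_upwards [hpg, hpos, ae_restrict_mem measurableSet_Ioi] with x h1 h2 h3
    rw [hfdef, indicator_of_mem h3, ← h1, max_eq_left h2]
  have hN : volume ({y : ℝ | p y ≠ f y} ∩ Ioi 0) = 0 := by
    have h1 := hpf
    rw [Filter.EventuallyEq, ae_iff, Measure.restrict_apply' measurableSet_Ioi] at h1
    exact h1
  -- pointwise bounds
  have hqQ : ∀ u : ℝ, 0 < u → ENNReal.ofReal (∫ v in Ioi u, p v / v) ≤ Q f u := by
    intro u hu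
    refine (ofReal_integral_le _ _).trans (le_of_eq (lintegral_congr_ae ?_))
    have hsub : p =ᵐ[volume.restrict (Ioi u)] f :=
      ae_restrict_of_ae_restrict_of_subset (Ioi_subset_Ioi hu.le) hpf
    filter_upwards [hsub] with v hv
    rw [hv]
  have hA : ∀ x : ℝ, 0 < x →
      ENNReal.ofReal (∫ u in (0:ℝ)..x, p (x - u) * ∫ v in Ioi u, p v / v)
        ≤ ∫⁻ u in Ioo (0:ℝ) x, ENNReal.ofReal (f (x - u)) * Q f u := by
    intro x hx
    rw [intervalIntegral.integral_of_le hx.le]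
    refine (ofReal_integral_le _ _).trans ?_
    rw [← restrict_Ioo_eq_restrict_Ioc]
    refine lintegral_mono_ae ?_
    have hnull : volume {u : ℝ | x - u ∈ {y : ℝ | p y ≠ f y} ∩ Ioi 0} = 0 :=
      (Measure.measurePreserving_sub_left volume x).quasiMeasurePreserving.preimage_null hN
    have h2 : ∀ᵐ u ∂volume, ¬ (x - u ∈ {y : ℝ | p y ≠ f y} ∩ Ioi 0) := by
      rw [ae_iff]
      simpa using hnull
    filter_upwards [ae_restrict_of_ae h2, ae_restrict_mem measurableSet_Ioo] with u h4 h5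
    have hxu : (0:ℝ) < x - u := sub_pos.2 h5.2
    have hpf' : p (x - u) = f (x - u) := by
      by_contra hne
      exact h4 ⟨hne, hxu⟩
    rw [hpf', ENNReal.ofReal_mul (hf0 _)]
    exact mul_le_mul_right (hqQ u h5.1) _
  -- notation
  set M : ℝ≥0∞ := ∫⁻ x in Ioi (0:ℝ), ENNReal.ofReal (x ^ α) * ENNReal.ofReal (f x) with hM
  have hmuα : Measurable fun x : ℝ => ENNReal.ofReal (x ^ α) := by measurability
  have hRHSM : ∫⁻ x in Ioi (0:ℝ), ENNReal.ofReal (x ^ α * p x) = M := by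
    refine lintegral_congr_ae ?_
    filter_upwards [hpf, ae_restrict_mem measurableSet_Ioi] with x h1 h2
    rw [h1, ENNReal.ofReal_mul (Real.rpow_nonneg (le_of_lt h2) α)]
  have hItot : ∫⁻ x in Ioi (0:ℝ), ENNReal.ofReal (f x) = 1 := by
    have h1 : ENNReal.ofReal (∫ x in Ioi (0:ℝ), p x) = ∫⁻ x in Ioi (0:ℝ), ENNReal.ofReal (p x) :=
      MeasureTheory.ofReal_integral_eq_lintegral_ofReal hint hpos
    rw [hone, ENNReal.ofReal_one] at h1
    refine Eq.trans (lintegral_congr_ae ?_) h1.symm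
    filter_upwards [hpf] with x hx
    rw [hx]
  have hQtot : ∫⁻ u in Ioi (0:ℝ), Q f u = 1 := (L_II f hf).trans hItot
  have hLI := L_I f hf hα0
  have h3 := L_III f hf hα
  rw [hQtot, hItot, hLI] at h3
  rw [hRHSM]
  calc ∫⁻ x in Ioi (0:ℝ), ENNReal.ofReal (x ^ α * T p x)
      ≤ ∫⁻ x in Ioi (0:ℝ),
          (ENNReal.ofReal (1/2) * (ENNReal.ofReal (x ^ α) *
              ∫⁻ u in Ioo (0:ℝ) x, ENNReal.ofReal (f (x - u)) * Q f u)
            + ENNReal.ofReal (1/2) * (ENNReal.ofReal (x ^ α) * Q f x)) := by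
        refine setLIntegral_mono' measurableSet_Ioi fun x hx => ?_
        have hx0 : (0:ℝ) < x := hx
        calc ENNReal.ofReal (x ^ α * T p x)
            = ENNReal.ofReal (x ^ α) * ENNReal.ofReal (T p x) :=
              ENNReal.ofReal_mul (Real.rpow_nonneg hx0.le α)
          _ ≤ ENNReal.ofReal (x ^ α) *
                (ENNReal.ofReal (1/2) *
                    ENNReal.ofReal (∫ u in (0:ℝ)..x, p (x - u) * ∫ v in Ioi u, p v / v)
                  + ENNReal.ofReal (1/2) * ENNReal.ofReal (∫ u in Ioi x, p u / u)) := by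
              refine mul_le_mul_right ?_ _
              rw [T]
              refine le_trans ENNReal.ofReal_add_le ?_
              rw [ENNReal.ofReal_mul (by norm_num), ENNReal.ofReal_mul (by norm_num)]
          _ ≤ ENNReal.ofReal (x ^ α) *
                (ENNReal.ofReal (1/2) * (∫⁻ u in Ioo (0:ℝ) x, ENNReal.ofReal (f (x - u)) * Q f u)
                  + ENNReal.ofReal (1/2) * Q f x) :=
              mul_le_mul_right (add_le_add (mul_le_mul_right (hA x hx0) _)
                (mul_le_mul_right (hqQ x hx0) _)) _
          _ = ENNReal.ofReal (1/2) * (ENNReal.ofReal (x ^ α) *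
                  ∫⁻ u in Ioo (0:ℝ) x, ENNReal.ofReal (f (x - u)) * Q f u)
                + ENNReal.ofReal (1/2) * (ENNReal.ofReal (x ^ α) * Q f x) := by
              ring
    _ = ENNReal.ofReal (1/2) * (∫⁻ x in Ioi (0:ℝ), ENNReal.ofReal (x ^ α) *
            ∫⁻ u in Ioo (0:ℝ) x, ENNReal.ofReal (f (x - u)) * Q f u)
          + ENNReal.ofReal (1/2) * ∫⁻ x in Ioi (0:ℝ), ENNReal.ofReal (x ^ α) * Q f x := by
        rw [lintegral_add_right _ (show Measurable fun x : ℝ => ENNReal.ofReal (1/2) * (ENNReal.ofReal (x ^ α) * Q f x) from measurable_const.mul (hmuα.mul (Q_meas f))),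
          lintegral_const_mul' _ _ ENNReal.ofReal_ne_top,
          lintegral_const_mul' _ _ ENNReal.ofReal_ne_top]
    _ ≤ ENNReal.ofReal (1/2) * (ENNReal.ofReal (2 ^ (α - 1)) *
            (M * 1 + 1 * (ENNReal.ofReal (1 / (α + 1)) * M)))
          + ENNReal.ofReal (1/2) * (ENNReal.ofReal (1 / (α + 1)) * M) := by
        exact add_le_add (mul_le_mul_right h3 _) (le_of_eq (congrArg _ hLI))
    _ = ENNReal.ofReal ((1 / (2 * (α + 1))) * (2 ^ (α - 1) * (α + 2) + 1)) * M := by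
        have hinv : (0:ℝ) ≤ 1 / (α + 1) := div_nonneg zero_le_one hα1.le
        have h2p : (0:ℝ) ≤ 2 ^ (α - 1) := Real.rpow_nonneg (by norm_num) _
        rw [mul_one, one_mul]
        have e1 : M + ENNReal.ofReal (1 / (α + 1)) * M = ENNReal.ofReal (1 + 1 / (α + 1)) * M := by
          rw [ENNReal.ofReal_add (by norm_num) hinv, ENNReal.ofReal_one, add_mul, one_mul]
        rw [e1]
        have e2 : ∀ a b e d : ℝ≥0∞, a * (b * (e * M)) + a * (d * M) = (a * (b * e) + a * d) * M := by
          intro a b e d; ring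
        rw [e2]
        congr 1
        rw [← ENNReal.ofReal_mul h2p, ← ENNReal.ofReal_mul (by norm_num : (0:ℝ) ≤ 1/2),
          ← ENNReal.ofReal_mul (by norm_num : (0:ℝ) ≤ 1/2),
          ← ENNReal.ofReal_add (by nlinarith) (by nlinarith)]
        congr 1
        have hne : (α + 1) ≠ 0 := ne_of_gt hα1
        set t : ℝ := 2 ^ (α - 1) with ht
        field_simp
        ring
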